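/- Let θ* ∈ (0, π) and β ≥ 1, and suppose θ^G ∈ (0, θ*/2) is a critical point of θ ↦ cos^β(θ) + cos^β(θ* − θ) (i.e., sin(θ^G) cos^{β−1}(θ^G) = sin(θ* − θ^G) cos^{β−1}(θ* − θ^G)). Then cos^β(θ^G) + cos^β(θ* − θ^G) = sin(θ*) cos^{β−1}(θ* − θ^G) / sin(θ^G). -/
import Mathlib

open Real

/-- If `θ^G ∈ (0, θ*/2)` satisfies the first-order condition
`sin(θ^G) cos^{β−1}(θ^G) = sin(θ* − θ^G) cos^{β−1}(θ* − θ^G)`, then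
`cos^β(θ^G) + cos^β(θ* − θ^G) = sin(θ*) cos^{β−1}(θ* − θ^G) / sin(θ^G)`. -/
theorem stmt12 (θs θG β : ℝ) (hθs : θs ∈ Set.Ioo 0 π) (hβ : 1 ≤ β)
    (hG0 : 0 < θG) (hG1 : θG < θs / 2) (hhalf : θs / 2 < π / 2)
    (hcos : 0 < Real.cos (θs - θG))
    (hFOC : Real.sin θG * Real.cos θG ^ (β - 1)
      = Real.sin (θs - θG) * Real.cos (θs - θG) ^ (β - 1)) :
    Real.cos θG ^ β + Real.cos (θs - θG) ^ β
      = Real.sin θs * Real.cos (θs - θG) ^ (β - 1) / Real.sin θG := by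
  have hcosG : 0 < Real.cos θG :=
    Real.cos_pos_of_mem_Ioo ⟨by linarith [Real.pi_pos], by linarith⟩
  have hsinG : 0 < Real.sin θG :=
    Real.sin_pos_of_pos_of_lt_pi hG0 (by linarith [Real.pi_pos, hθs.2])
  have hsplit : Real.sin θs
      = Real.sin θG * Real.cos (θs - θG) + Real.cos θG * Real.sin (θs - θG) := by
    have := Real.sin_add θG (θs - θG)
    simpa using this
  have hβG : Real.cos θG ^ β = Real.cos θG * Real.cos θG ^ (β - 1) := by
    rw [← Real.rpow_one_add' (le_of_lt hcosG) (by intro h; linarith : 1 + (β-1) ≠ 0)]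
    ring_nf
  have hβS : Real.cos (θs - θG) ^ β
      = Real.cos (θs - θG) * Real.cos (θs - θG) ^ (β - 1) := by
    rw [← Real.rpow_one_add' (le_of_lt hcos) (by intro h; linarith : 1 + (β-1) ≠ 0)]
    ring_nf
  rw [eq_div_iff hsinG.ne', hsplit, hβG, hβS]
  nlinarith [hFOC]
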